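/- arXiv:2402.10441 — 3 statements merged into one kernel-verified Lean document; each statement's English description precedes it below -/
import Mathlib

section
/- Let h : ℕ → ℝ and α : ℕ → ℝ, fix k ≥ 1 with α k ∈ (0,1), and suppose the non-strict discrete-time barrier constraint h k - h (k-1) + (α k) * h (k-1) ≥ 0 holds at step k. Define the Lyapunov values V j := (max (-(h j)) 0)². Then V k ≤ (1 - α k)² * V (k-1); equivalently V k - V (k-1) ≤ -c_k * V (k-1) where c_k := 1 - (1 - α k)² ∈ (0,1). (One-step Lyapunov decrease from the proof of Theorem 2.) -/
/-- One-step Lyapunov decrease from the proof of Theorem 2, with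
`V j = (max (-(h j)) 0)²` and `c_k = 1 - (1 - α k)² ∈ (0,1)`. -/
theorem barrier_lyapunov_one_step_decrease
    (h α : ℕ → ℝ) (k : ℕ) (hk : 1 ≤ k)
    (hαk : α k ∈ Set.Ioo (0 : ℝ) 1)
    (hbar : h k - h (k - 1) + α k * h (k - 1) ≥ 0) :
    (max (-(h k)) 0) ^ 2 ≤ (1 - α k) ^ 2 * (max (-(h (k - 1))) 0) ^ 2 ∧
    (max (-(h k)) 0) ^ 2 - (max (-(h (k - 1))) 0) ^ 2
        ≤ -(1 - (1 - α k) ^ 2) * (max (-(h (k - 1))) 0) ^ 2 ∧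
    (1 - (1 - α k) ^ 2) ∈ Set.Ioo (0 : ℝ) 1 := by
  obtain ⟨hα0, hα1⟩ := hαk
  have h1 : (0:ℝ) ≤ 1 - α k := by linarith
  have key : max (-(h k)) 0 ≤ (1 - α k) * max (-(h (k-1))) 0 := by
    rcases le_total (-(h (k-1))) 0 with hc | hc
    · rw [max_eq_right hc]
      rw [max_le_iff]
      constructor
      · nlinarith
      · positivity
    · rw [max_eq_left hc, max_le_iff]
      constructor
      · nlinarith
      · nlinarith
  have main : (max (-(h k)) 0) ^ 2 ≤ (1 - α k) ^ 2 * (max (-(h (k - 1))) 0) ^ 2 := by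
    have := mul_self_le_mul_self (le_max_right _ _) key
    nlinarith [le_max_right (-(h k)) (0:ℝ)]
  refine ⟨main, by linarith, ⟨by nlinarith, by nlinarith [sq_nonneg (1 - α k)]⟩⟩
end

section
/- Let h : ℕ → ℝ, α : ℕ → ℝ, and α_min ∈ (0,1) be such that α_min ≤ α k and α k < 1 for all k ≥ 1. If the non-strict discrete-time barrier constraint h k - h (k-1) + (α k) * h (k-1) ≥ 0 holds for every k ≥ 1, then for every k ∈ ℕ, max (-(h k)) 0 ≤ (1 - α_min)^k * (max (-(h 0)) 0), and consequently max (-(h k)) 0 tends to 0 as k → ∞; i.e., from any initial (possibly unsafe) barrier value the trajectory asymptotically converges to the safe set {h ≥ 0}. (Theorem 2.) -/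
/-- Theorem 2: geometric decay of the distance-to-safety `max (-(h k)) 0`
and asymptotic convergence to the safe set `{h ≥ 0}`. -/
theorem barrier_asymptotic_convergence_to_safe_set
    (h α : ℕ → ℝ) (αmin : ℝ)
    (hαmin : αmin ∈ Set.Ioo (0 : ℝ) 1)
    (hα : ∀ k, 1 ≤ k → αmin ≤ α k ∧ α k < 1)
    (hbar : ∀ k, 1 ≤ k → h k - h (k - 1) + α k * h (k - 1) ≥ 0) :
    (∀ k, max (-(h k)) 0 ≤ (1 - αmin) ^ k * max (-(h 0)) 0) ∧
    Filter.Tendsto (fun k => max (-(h k)) 0) Filter.atTop (nhds 0) := by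
  obtain ⟨hα0, hα1⟩ := hαmin
  have key : ∀ k, max (-(h k)) 0 ≤ (1 - αmin) ^ k * max (-(h 0)) 0 := by
    intro k
    induction k with
    | zero => simp
    | succ n ih =>
      have h1 : 1 ≤ n + 1 := Nat.le_add_left 1 n
      obtain ⟨ha, hb⟩ := hα (n + 1) h1
      have hb' := hbar (n + 1) h1
      simp only [Nat.add_sub_cancel] at hb'
      have hstep : -(h (n + 1)) ≤ (1 - α (n + 1)) * (-(h n)) := by nlinarith
      have hpos : 0 ≤ 1 - α (n + 1) := by linarith
      have hle : max (-(h (n + 1))) 0 ≤ (1 - αmin) * max (-(h n)) 0 := by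
        apply max_le
        · calc -(h (n + 1)) ≤ (1 - α (n + 1)) * (-(h n)) := hstep
            _ ≤ (1 - α (n + 1)) * max (-(h n)) 0 :=
              mul_le_mul_of_nonneg_left (le_max_left _ _) hpos
            _ ≤ (1 - αmin) * max (-(h n)) 0 := by
              apply mul_le_mul_of_nonneg_right (by linarith) (le_max_right _ _)
        · exact mul_nonneg (by linarith) (le_max_right _ _)
      calc max (-(h (n + 1))) 0 ≤ (1 - αmin) * max (-(h n)) 0 := hle
        _ ≤ (1 - αmin) * ((1 - αmin) ^ n * max (-(h 0)) 0) := by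
            apply mul_le_mul_of_nonneg_left ih (by linarith)
        _ = (1 - αmin) ^ (n + 1) * max (-(h 0)) 0 := by ring
  refine ⟨key, ?_⟩
  have hgeo : Filter.Tendsto (fun k => (1 - αmin) ^ k * max (-(h 0)) 0)
      Filter.atTop (nhds 0) := by
    have := tendsto_pow_atTop_nhds_zero_of_lt_one (by linarith : (0:ℝ) ≤ 1 - αmin)
      (by linarith : 1 - αmin < 1)
    simpa using this.mul_const (max (-(h 0)) 0)
  exact squeeze_zero (fun k => le_max_right _ _) key hgeo
end

section
/- Let h : ℕ → ℝ and α : ℕ → ℝ with α k ∈ (0,1) for all k ≥ 1. If the non-strict discrete-time barrier constraint h k - h (k-1) + (α k) * h (k-1) ≥ 0 holds for every k ≥ 1, then for every k ∈ ℕ one has the robust lower bound h k ≥ -(max (-(h 0)) 0) * ∏_{i=1}^{k} (1 - α i), valid regardless of whether the initial barrier value h 0 is safe or unsafe. -/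
/-- Robust lower bound on the barrier value, valid whether or not the initial
barrier value is safe: `h k ≥ -(max (-(h 0)) 0) * ∏_{i=1}^{k} (1 - α i)`. -/
theorem barrier_robust_lower_bound
    (h α : ℕ → ℝ)
    (hα : ∀ k, 1 ≤ k → α k ∈ Set.Ioo (0 : ℝ) 1)
    (hbar : ∀ k, 1 ≤ k → h k - h (k - 1) + α k * h (k - 1) ≥ 0) :
    ∀ k, h k ≥ -(max (-(h 0)) 0) * ∏ i ∈ Finset.Icc 1 k, (1 - α i) := by
  intro k
  induction k with
  | zero =>
    have : Finset.Icc 1 0 = (∅ : Finset ℕ) := by simp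
    rw [this, Finset.prod_empty, mul_one]
    rcases le_or_gt 0 (h 0) with h0 | h0
    · have : max (-(h 0)) 0 = 0 := max_eq_right (by linarith)
      rw [this]; linarith
    · have : max (-(h 0)) 0 = -(h 0) := max_eq_left (by linarith)
      rw [this]; linarith
  | succ n ih =>
    have hk : 1 ≤ n + 1 := Nat.le_add_left 1 n
    obtain ⟨ha0, ha1⟩ := hα (n + 1) hk
    have hb := hbar (n + 1) hk
    simp only [Nat.add_sub_cancel] at hb
    have step : h (n + 1) ≥ (1 - α (n + 1)) * h n := by nlinarith
    have hpos : 0 < 1 - α (n + 1) := by linarith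
    rw [Finset.prod_Icc_succ_top hk]
    have := mul_le_mul_of_nonneg_left ih (le_of_lt hpos)
    calc h (n + 1) ≥ (1 - α (n + 1)) * h n := step
      _ ≥ (1 - α (n + 1)) * (-(max (-(h 0)) 0) * ∏ i ∈ Finset.Icc 1 n, (1 - α i)) := this
      _ = -(max (-(h 0)) 0) * ((∏ i ∈ Finset.Icc 1 n, (1 - α i)) * (1 - α (n + 1))) := by ring
end
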